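/- On ℝ⁶ with coordinates (x⁰,x¹,x²,x³,x⁴,x⁵), define the smooth 1-forms ω⁰ = dx⁰ + x¹dx⁴ − 3x²dx³; ω¹ = dx¹ + 3x⁵dx² + 3(x⁵)²dx³ + (x⁵)³dx⁴; ω² = dx² + 2x⁵dx³ + (x⁵)²dx⁴; ω³ = dx³ + x⁵dx⁴; ω⁴ = dx⁴; ω⁷ = −dx⁵. Then at every point these six 1-forms are linearly independent (a coframe), and their exterior derivatives satisfy dω⁰ = ω¹∧ω⁴ − 3ω²∧ω³, dω¹ = 3ω²∧ω⁷, dω² = 2ω³∧ω⁷, dω³ = ω⁴∧ω⁷, dω⁴ = 0, dω⁷ = 0. -/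

import Mathlib

open Matrix

noncomputable section

/-- Points of `ℝ⁶` with coordinates `(x⁰,…,x⁵)`. -/
abbrev Pt6 := Fin 6 → ℝ

/-- Exterior derivative of a 1-form `θ` (given by its components):
`dθ(p)(v,w) = (Dθ)_p(v)(w) − (Dθ)_p(w)(v)`. -/
def extD (θ : Pt6 → Pt6) (p v w : Pt6) : ℝ :=
  fderiv ℝ θ p v ⬝ᵥ w - fderiv ℝ θ p w ⬝ᵥ v

/-- Wedge of two 1-forms: `(α∧β)(v,w) = α(v)β(w) − α(w)β(v)`. -/
def wedge (α β : Pt6 → Pt6) (p v w : Pt6) : ℝ :=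
  (α p ⬝ᵥ v) * (β p ⬝ᵥ w) - (α p ⬝ᵥ w) * (β p ⬝ᵥ v)

def θ0 : Pt6 → Pt6 := fun p => ![1, 0, 0, -3 * p 2, p 1, 0]
def θ1 : Pt6 → Pt6 := fun p => ![0, 1, 3 * p 5, 3 * p 5 ^ 2, p 5 ^ 3, 0]
def θ2 : Pt6 → Pt6 := fun p => ![0, 0, 1, 2 * p 5, p 5 ^ 2, 0]
def θ3 : Pt6 → Pt6 := fun p => ![0, 0, 0, 1, p 5, 0]
def θ4 : Pt6 → Pt6 := fun _ => ![0, 0, 0, 0, 1, 0]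
def θ7 : Pt6 → Pt6 := fun _ => ![0, 0, 0, 0, 0, -1]


lemma cons_val_five' {α : Type*} {m : ℕ} (x : α) (u : Fin (m+5) → α) :
    Matrix.vecCons x u 5 =
      Matrix.vecHead (Matrix.vecTail (Matrix.vecTail (Matrix.vecTail (Matrix.vecTail u)))) :=
  rfl

def pr (i : Fin 6) : Pt6 →L[ℝ] ℝ := ContinuousLinearMap.proj i

lemma hproj (i : Fin 6) (p : Pt6) :
    HasFDerivAt (fun q : Pt6 => q i) (pr i) p :=
  (pr i).hasFDerivAt

lemma hpow2 (p : Pt6) : HasFDerivAt (fun q : Pt6 => q 5 ^ 2) ((2 * p 5) • pr 5) p := by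
  have h := (hproj 5 p).mul (hproj 5 p)
  have e : (fun q : Pt6 => q 5 ^ 2) = fun q => q 5 * q 5 := by funext q; ring
  rw [e]
  exact h.congr_fderiv (by module)

lemma hpow3 (p : Pt6) : HasFDerivAt (fun q : Pt6 => q 5 ^ 3) ((3 * p 5 ^ 2) • pr 5) p := by
  have h := (hpow2 p).mul (hproj 5 p)
  have e : (fun q : Pt6 => q 5 ^ 3) = fun q => q 5 ^ 2 * q 5 := by funext q; ring
  rw [e]
  exact h.congr_fderiv (by rw [smul_smul, ← add_smul]; congr 1; ring)

lemma d0 (p : Pt6) : fderiv ℝ θ0 p =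
    ContinuousLinearMap.pi ![0, 0, 0, -((3:ℝ) • pr 2), pr 1, 0] := by
  refine HasFDerivAt.fderiv ?_
  apply hasFDerivAt_pi.2
  intro i
  fin_cases i <;> simp [θ0, cons_val_five'] <;>
    first
      | exact hasFDerivAt_const _ _
      | exact hproj _ p
      | exact ((hproj 2 p).const_mul 3).neg

lemma d1 (p : Pt6) : fderiv ℝ θ1 p =
    ContinuousLinearMap.pi ![0, 0, (3:ℝ) • pr 5, (3:ℝ) • ((2 * p 5) • pr 5),
      (3 * p 5 ^ 2) • pr 5, 0] := by
  refine HasFDerivAt.fderiv ?_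
  apply hasFDerivAt_pi.2
  intro i
  fin_cases i <;> simp [θ1, cons_val_five'] <;>
    first
      | exact hasFDerivAt_const _ _
      | exact (hproj 5 p).const_mul 3
      | exact (hpow2 p).const_mul 3
      | exact hpow3 p

lemma d2 (p : Pt6) : fderiv ℝ θ2 p =
    ContinuousLinearMap.pi ![0, 0, 0, (2:ℝ) • pr 5, (2 * p 5) • pr 5, 0] := by
  refine HasFDerivAt.fderiv ?_
  apply hasFDerivAt_pi.2
  intro i
  fin_cases i <;> simp [θ2, cons_val_five'] <;>
    first
      | exact hasFDerivAt_const _ _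
      | exact (hproj 5 p).const_mul 2
      | exact hpow2 p

lemma d3 (p : Pt6) : fderiv ℝ θ3 p =
    ContinuousLinearMap.pi ![0, 0, 0, 0, pr 5, 0] := by
  refine HasFDerivAt.fderiv ?_
  apply hasFDerivAt_pi.2
  intro i
  fin_cases i <;> simp [θ3, cons_val_five'] <;>
    first
      | exact hasFDerivAt_const _ _
      | exact hproj 5 p

lemma d4 (p : Pt6) : fderiv ℝ θ4 p = 0 := fderiv_const_apply _

lemma d7 (p : Pt6) : fderiv ℝ θ7 p = 0 := fderiv_const_apply _

/-- The six 1-forms `ω⁰ = dx⁰ + x¹dx⁴ − 3x²dx³`, `ω¹ = dx¹ + 3x⁵dx² + 3(x⁵)²dx³ + (x⁵)³dx⁴`,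
`ω² = dx² + 2x⁵dx³ + (x⁵)²dx⁴`, `ω³ = dx³ + x⁵dx⁴`, `ω⁴ = dx⁴`, `ω⁷ = −dx⁵` form
a coframe on `ℝ⁶` and satisfy the structure equations `dω⁰ = ω¹∧ω⁴ − 3ω²∧ω³`,
`dω¹ = 3ω²∧ω⁷`, `dω² = 2ω³∧ω⁷`, `dω³ = ω⁴∧ω⁷`, `dω⁴ = 0`, `dω⁷ = 0`. -/
theorem G2_correspondence_space_structure_equations :
    (∀ p : Pt6, LinearIndependent ℝ ![θ0 p, θ1 p, θ2 p, θ3 p, θ4 p, θ7 p]) ∧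
    (∀ p v w : Pt6,
      extD θ0 p v w = wedge θ1 θ4 p v w - 3 * wedge θ2 θ3 p v w ∧
      extD θ1 p v w = 3 * wedge θ2 θ7 p v w ∧
      extD θ2 p v w = 2 * wedge θ3 θ7 p v w ∧
      extD θ3 p v w = wedge θ4 θ7 p v w ∧
      extD θ4 p v w = 0 ∧
      extD θ7 p v w = 0) := by
  constructor
  · intro p
    rw [Fintype.linearIndependent_iff]
    intro g hg
    have h := fun j : Fin 6 => congrFun hg j
    simp [Fin.sum_univ_six, θ0, θ1, θ2, θ3, θ4, θ7, cons_val_five'] at h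
    have h0 := h 0; have h1 := h 1; have h2 := h 2
    have h3 := h 3; have h4 := h 4; have h5 := h 5
    simp [cons_val_five'] at h0 h1 h2 h3 h4 h5
    have e2 : g 2 = 0 := by linear_combination h2 - 3 * p 5 * h1
    have e3 : g 3 = 0 := by
      linear_combination h3 + 3 * p 2 * h0 - 3 * p 5 ^ 2 * h1 - 2 * p 5 * e2
    have e4 : g 4 = 0 := by
      linear_combination h4 - p 1 * h0 - p 5 ^ 3 * h1 - p 5 ^ 2 * e2 - p 5 * e3
    intro i
    fin_cases i <;> first | exact h0 | exact h1 | exact e2 | exact e3 | exact e4 | exact h5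
  · intro p v w
    refine ⟨?_, ?_, ?_, ?_, ?_, ?_⟩ <;>
      simp [extD, wedge, d0, d1, d2, d3, d4, d7, θ0, θ1, θ2, θ3, θ4, θ7,
        dotProduct, Fin.sum_univ_six, pr, cons_val_five'] <;> ring
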